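/- Let G = (V, E) be a finite simple triangle-free graph and w : E → ℝ_{≥0}. Then for every decomposition d_w = φ_1 + φ_2 with φ_1 increasing submodular and φ_2 decreasing submodular and φ_1(∅)=φ_2(∅)=0, one has φ_1(V) ≥ w(E); moreover equality is attained, so the minimum of φ_1(V) over such decompositions equals w(E). -/

import Mathlib

open Classical in
/-- The weighted cut function on a finite graph (Finset version). -/
noncomputable def cutW {V : Type*} [Fintype V] (G : SimpleGraph V)
    (w : Sym2 V → ℝ) (X : Finset V) : ℝ :=
  ∑ e ∈ G.edgeFinset, if (∃ u ∈ e, u ∈ X) ∧ (∃ u ∈ e, u ∉ X) then w e else 0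

set_option linter.unusedSectionVars false
set_option linter.unreachableTactic false
set_option linter.unusedTactic false

namespace Stmt18Aux

open Finset

variable {V : Type*} [Fintype V] [DecidableEq V]

open Classical in
/-- Neighbors of `z` inside `W`. -/
noncomputable def nbr (G : SimpleGraph V) (W : Finset V) (z : V) : Finset V :=
  W.filter (fun x => G.Adj z x)

open Classical in
/-- Weighted degree. -/
noncomputable def degW (G : SimpleGraph V) (w : Sym2 V → ℝ) (z : V) : ℝ :=
  ∑ e ∈ G.edgeFinset, if z ∈ e then w e else 0

/-- The sum of marginals of `g` along an ordering, each taken at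
prefix ∪ (neighborhood within `W`). -/
noncomputable def auxF (G : SimpleGraph V) (g : Finset V → ℝ) :
    Finset V → List V → ℝ
  | _, [] => 0
  | W, z :: T =>
      (g (insert z (T.toFinset ∪ nbr G W z)) - g (T.toFinset ∪ nbr G W z)) +
        auxF G g W T

lemma mem_nbr {G : SimpleGraph V} {W : Finset V} {z x : V} :
    x ∈ nbr G W z ↔ x ∈ W ∧ G.Adj z x := by
  simp [nbr]

section CutLemmas

variable (G : SimpleGraph V) (w : Sym2 V → ℝ)

lemma cut_modular {u v : V} (huv : u ≠ v) (hadj : ¬ G.Adj u v) (B : Finset V)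
    (hu : u ∉ B) (hv : v ∉ B) :
    cutW G w B + cutW G w (insert u (insert v B)) =
      cutW G w (insert u B) + cutW G w (insert v B) := by
  unfold cutW
  rw [← Finset.sum_add_distrib, ← Finset.sum_add_distrib]
  refine Finset.sum_congr rfl ?_
  intro e he
  induction e using Sym2.ind with
  | _ a b =>
    have hab : G.Adj a b := by simpa using he
    have h1 : ¬(a = u ∧ b = v) := by rintro ⟨rfl, rfl⟩; exact hadj hab
    have h2 : ¬(a = v ∧ b = u) := by rintro ⟨rfl, rfl⟩; exact hadj hab.symm
    have hne : a ≠ b := hab.ne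
    simp only [Sym2.mem_iff, Finset.mem_insert]
    by_cases hau : a = u <;> by_cases hbu : b = u <;> by_cases hav : a = v <;>
      by_cases hbv : b = v <;> by_cases haB : a ∈ B <;> by_cases hbB : b ∈ B <;>
      simp_all

lemma cut_insert_full {z : V} (A : Finset V) (hz : z ∉ A)
    (hN : ∀ x, G.Adj z x → x ∈ A) :
    cutW G w A = cutW G w (insert z A) + degW G w z := by
  unfold cutW degW
  rw [← Finset.sum_add_distrib]
  refine Finset.sum_congr rfl ?_
  intro e he
  induction e using Sym2.ind with
  | _ a b =>
    have hab : G.Adj a b := by simpa using he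
    have hne : a ≠ b := hab.ne
    simp only [Sym2.mem_iff, Finset.mem_insert]
    by_cases haz : a = z <;> by_cases hbz : b = z
    · exact absurd (haz.trans hbz.symm) hne
    · have hbA : b ∈ A := hN b (haz ▸ hab)
      have haA : a ∉ A := haz ▸ hz
      simp_all
    · have haA : a ∈ A := hN a (hbz ▸ hab.symm)
      have hbA : b ∉ A := hbz ▸ hz
      simp_all
    · have hza : ¬ z = a := fun h => haz h.symm
      have hzb : ¬ z = b := fun h => hbz h.symm
      simp_all

lemma cut_univ_eq_zero : cutW G w (Finset.univ : Finset V) = 0 := by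
  unfold cutW
  refine Finset.sum_eq_zero ?_
  intro e _
  rw [if_neg]
  rintro ⟨-, ⟨x, -, hx⟩⟩
  exact hx (Finset.mem_univ x)

open Classical in
lemma sum_degW : ∑ v : V, degW G w v = 2 * ∑ e ∈ G.edgeFinset, w e := by
  unfold degW
  rw [Finset.sum_comm, Finset.mul_sum]
  refine Finset.sum_congr rfl ?_
  intro e he
  induction e using Sym2.ind with
  | _ a b =>
    have hab : G.Adj a b := by simpa using he
    have hne : a ≠ b := hab.ne
    have hfil : (Finset.univ.filter (fun v => v ∈ s(a, b))) = {a, b} := by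
      ext x; simp [Sym2.mem_iff]
    rw [← Finset.sum_filter, hfil, Finset.sum_pair hne]
    ring

end CutLemmas

section GLemmas

variable {G : SimpleGraph V} {g : Finset V → ℝ}

/-- marginal monotone (from supermodularity). -/
lemma marg_mono (hsuper : ∀ X Y : Finset V, g X + g Y ≤ g (X ∩ Y) + g (X ∪ Y))
    {z u : V} (A : Finset V) (hz : z ∉ A) (hzu : z ≠ u) :
    g (insert z A) - g A ≤ g (insert z (insert u A)) - g (insert u A) := by
  by_cases hu : u ∈ A
  · rw [Finset.insert_eq_self.2 hu]
  · have h := hsuper (insert z A) (insert u A)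
    have h1 : insert z A ∩ insert u A = A := by
      ext x
      simp only [Finset.mem_inter, Finset.mem_insert]
      constructor
      · rintro ⟨h1 | h1, h2 | h2⟩ <;> first | assumption | (subst h1; tauto)
      · tauto
    have h2 : insert z A ∪ insert u A = insert z (insert u A) := by
      ext x
      simp only [Finset.mem_union, Finset.mem_insert]
      tauto
    rw [h1, h2] at h
    linarith

/-- KEY: the marginal of `z` is unchanged by inserting a non-neighbor. -/
lemma key1 (hsuper : ∀ X Y : Finset V, g X + g Y ≤ g (X ∩ Y) + g (X ∪ Y))
    (hcross : ∀ (B : Finset V) (u v : V), u ≠ v → ¬ G.Adj u v → u ∉ B → v ∉ B →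
      g (insert u (insert v B)) + g B ≤ g (insert u B) + g (insert v B))
    {z x : V} (C : Finset V) (hz : z ∉ C) (hxz : x ≠ z) (hadj : ¬ G.Adj x z) :
    g (insert z (insert x C)) - g (insert x C) = g (insert z C) - g C := by
  by_cases hx : x ∈ C
  · rw [Finset.insert_eq_self.2 hx]
  · have hle := hcross C z x (Ne.symm hxz) (fun h => hadj h.symm) hz hx
    have h := hsuper (insert z C) (insert x C)
    have h1 : insert z C ∩ insert x C = C := by
      ext y
      simp only [Finset.mem_inter, Finset.mem_insert]
      constructor
      · rintro ⟨h1 | h1, h2 | h2⟩ <;> first | assumption | (subst h1; tauto)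
      · tauto
    have h2 : insert z C ∪ insert x C = insert z (insert x C) := by
      ext y
      simp only [Finset.mem_union, Finset.mem_insert]
      tauto
    rw [h1, h2] at h
    have h3 : insert z (insert x C) = insert x (insert z C) := Finset.insert_comm z x C
    rw [h3] at hle h ⊢
    linarith

/-- KEY iterated over a finset of non-neighbors. -/
lemma keyStar (hsuper : ∀ X Y : Finset V, g X + g Y ≤ g (X ∩ Y) + g (X ∪ Y))
    (hcross : ∀ (B : Finset V) (u v : V), u ≠ v → ¬ G.Adj u v → u ∉ B → v ∉ B →
      g (insert u (insert v B)) + g B ≤ g (insert u B) + g (insert v B))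
    {z : V} (s : Finset V) (hs : ∀ x ∈ s, x ≠ z ∧ ¬ G.Adj x z) :
    ∀ C : Finset V, z ∉ C →
      g (insert z (C ∪ s)) - g (C ∪ s) = g (insert z C) - g C := by
  induction s using Finset.induction_on with
  | empty => intro C _; simp
  | @insert x s hx ih =>
    intro C hzC
    have hxz := hs x (Finset.mem_insert_self x s)
    have hzs : z ∉ s := fun h => (hs z (Finset.mem_insert_of_mem h)).1 rfl
    have hzCs : z ∉ C ∪ s := by
      simp only [Finset.mem_union]; tauto
    have e1 : C ∪ insert x s = insert x (C ∪ s) := Finset.union_insert x C s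
    rw [e1, key1 hsuper hcross (C ∪ s) hzCs hxz.1 hxz.2]
    exact ih (fun y hy => hs y (Finset.mem_insert_of_mem hy)) C hzC

/-- Comparison lemma: removing `z` from the reference set `W` changes `auxF`
by at most the marginal of `z` at `T.toFinset`. -/
lemma cmp (htri : ∀ a b c : V, G.Adj a b → G.Adj a c → b ≠ c → ¬ G.Adj b c)
    (hmono : ∀ X Y : Finset V, X ⊆ Y → g X ≤ g Y)
    (hsuper : ∀ X Y : Finset V, g X + g Y ≤ g (X ∩ Y) + g (X ∪ Y))
    (hcross : ∀ (B : Finset V) (u v : V), u ≠ v → ¬ G.Adj u v → u ∉ B → v ∉ B →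
      g (insert u (insert v B)) + g B ≤ g (insert u B) + g (insert v B))
    {z : V} :
    ∀ T : List V, ∀ W : Finset V, T.Nodup → z ∉ T.toFinset → z ∈ W →
      auxF G g W T ≤ auxF G g (W.erase z) T +
        (g (insert z T.toFinset) - g T.toFinset) := by
  intro T
  induction T with
  | nil =>
    intro W _ _ _
    simp only [auxF, List.toFinset_nil]
    have h := hmono ∅ (insert z ∅) (Finset.empty_subset _)
    linarith
  | cons u R ih =>
    intro W hnd hzT hzW
    obtain ⟨huR, hRnd⟩ := List.nodup_cons.mp hnd
    have hzu : z ≠ u := by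
      intro h; exact hzT (by simp [h])
    have hzRf : z ∉ R.toFinset := fun h => hzT (by simp [h])
    have huRf : u ∉ R.toFinset := by simpa using huR
    have hzB' : z ∉ nbr G (W.erase z) u := by
      intro h; exact (Finset.mem_erase.mp (mem_nbr.mp h).1).1 rfl
    have ihR := ih W hRnd hzRf hzW
    simp only [auxF, List.toFinset_cons]
    by_cases hadj : G.Adj u z
    · -- z is a neighbor of u
      have hnbW : nbr G W u = insert z (nbr G (W.erase z) u) := by
        ext x
        simp only [mem_nbr, Finset.mem_insert, Finset.mem_erase]
        constructor
        · rintro ⟨h1, h2⟩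
          by_cases hx : x = z
          · exact Or.inl hx
          · exact Or.inr ⟨⟨hx, h1⟩, h2⟩
        · rintro (rfl | ⟨⟨-, h1⟩, h2⟩)
          · exact ⟨hzW, hadj⟩
          · exact ⟨h1, h2⟩
      have hB's : ∀ x ∈ nbr G (W.erase z) u, x ≠ z ∧ ¬ G.Adj x z := by
        intro x hx
        obtain ⟨hx1, hx2⟩ := mem_nbr.mp hx
        have hxz : x ≠ z := (Finset.mem_erase.mp hx1).1
        exact ⟨hxz, htri u x z hx2 hadj hxz⟩
      have hzuRf : z ∉ insert u R.toFinset := by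
        simp only [Finset.mem_insert]
        rintro (h | h)
        · exact hzu h
        · exact hzRf h
      have ka := keyStar hsuper hcross (nbr G (W.erase z) u) hB's
        (insert u R.toFinset) hzuRf
      have kb := keyStar hsuper hcross (nbr G (W.erase z) u) hB's R.toFinset hzRf
      rw [hnbW, Finset.union_insert]
      have e2 : insert u (insert z (R.toFinset ∪ nbr G (W.erase z) u)) =
          insert z (insert u (R.toFinset ∪ nbr G (W.erase z) u)) :=
        Finset.insert_comm _ _ _
      rw [e2]
      have e3 : insert u R.toFinset ∪ nbr G (W.erase z) u =
          insert u (R.toFinset ∪ nbr G (W.erase z) u) :=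
        Finset.insert_union _ _ _
      rw [e3] at ka
      linarith
    · -- z is not a neighbor of u
      have hnbW : nbr G W u = nbr G (W.erase z) u := by
        ext x
        simp only [mem_nbr, Finset.mem_erase]
        constructor
        · rintro ⟨h1, h2⟩
          exact ⟨⟨fun hx => hadj (hx ▸ h2), h1⟩, h2⟩
        · rintro ⟨⟨-, h1⟩, h2⟩
          exact ⟨h1, h2⟩
      rw [hnbW]
      have hmarg := marg_mono hsuper R.toFinset hzRf hzu
      linarith

/-- Main lemma: the sum of marginals is at most `2 g(V)`. -/
lemma main_ineq (htri : ∀ a b c : V, G.Adj a b → G.Adj a c → b ≠ c → ¬ G.Adj b c)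
    (hmono : ∀ X Y : Finset V, X ⊆ Y → g X ≤ g Y)
    (hsuper : ∀ X Y : Finset V, g X + g Y ≤ g (X ∩ Y) + g (X ∪ Y))
    (hcross : ∀ (B : Finset V) (u v : V), u ≠ v → ¬ G.Adj u v → u ∉ B → v ∉ B →
      g (insert u (insert v B)) + g B ≤ g (insert u B) + g (insert v B))
    (h0 : g ∅ = 0) :
    ∀ L : List V, L.Nodup → auxF G g L.toFinset L ≤ 2 * g L.toFinset := by
  intro L
  induction L with
  | nil => intro _; simp [auxF, List.toFinset_nil, h0]
  | cons z T ih =>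
    intro hnd
    obtain ⟨hzT, hTnd⟩ := List.nodup_cons.mp hnd
    have hzTf : z ∉ T.toFinset := by simpa using hzT
    simp only [auxF, List.toFinset_cons]
    have hsub : nbr G (insert z T.toFinset) z ⊆ T.toFinset := by
      intro x hx
      obtain ⟨h1, h2⟩ := mem_nbr.mp hx
      have hxz : x ≠ z := fun h => G.irrefl (h ▸ h2)
      rcases Finset.mem_insert.mp h1 with h | h
      · exact absurd h hxz
      · exact h
    have e1 : T.toFinset ∪ nbr G (insert z T.toFinset) z = T.toFinset :=
      Finset.union_eq_left.mpr hsub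
    rw [e1]
    have hcmp := cmp htri hmono hsuper hcross T (insert z T.toFinset) hTnd hzTf
      (Finset.mem_insert_self z T.toFinset)
    rw [Finset.erase_insert hzTf] at hcmp
    have hih := ih hTnd
    linarith

end GLemmas

open Classical in
/-- Lower bound lemma: the total weighted degree is at most `auxF` over `univ`. -/
lemma lower_ineq (G : SimpleGraph V) (w : Sym2 V → ℝ) {g : Finset V → ℝ}
    (hphi : ∀ (A : Finset V) (z : V), z ∉ A → (∀ x, G.Adj z x → x ∈ A) →
      degW G w z ≤ g (insert z A) - g A) :
    ∀ L : List V, L.Nodup → (L.map (degW G w)).sum ≤ auxF G g Finset.univ L := by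
  intro L
  induction L with
  | nil => intro _; simp [auxF]
  | cons z T ih =>
    intro hnd
    obtain ⟨hzT, hTnd⟩ := List.nodup_cons.mp hnd
    simp only [auxF, List.map_cons, List.sum_cons]
    have hzA : z ∉ T.toFinset ∪ nbr G Finset.univ z := by
      simp only [Finset.mem_union, mem_nbr]
      rintro (h | ⟨-, h⟩)
      · exact hzT (by simpa using h)
      · exact G.irrefl h
    have hN : ∀ x, G.Adj z x → x ∈ T.toFinset ∪ nbr G Finset.univ z := fun x hx =>
      Finset.mem_union_right _ (mem_nbr.mpr ⟨Finset.mem_univ x, hx⟩)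
    have h1 := hphi _ z hzA hN
    have h2 := ih hTnd
    linarith

end Stmt18Aux

open Classical in
/-- For a triangle-free graph, the minimum of `φ₁(V)` over monotonic
sum-decompositions `d_w = φ₁ + φ₂` equals the total edge weight `w(E)`. -/
theorem stmt18 {V : Type*} [Fintype V] [DecidableEq V] (G : SimpleGraph V)
    (hG : G.CliqueFree 3) (w : Sym2 V → ℝ) (hw : ∀ e, 0 ≤ w e) :
    IsLeast {r : ℝ | ∃ φ₁ φ₂ : Finset V → ℝ, φ₁ ∅ = 0 ∧ φ₂ ∅ = 0 ∧
        (∀ X Y : Finset V, X ⊆ Y → φ₁ X ≤ φ₁ Y) ∧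
        (∀ X Y : Finset V, φ₁ (X ∩ Y) + φ₁ (X ∪ Y) ≤ φ₁ X + φ₁ Y) ∧
        (∀ X Y : Finset V, X ⊆ Y → φ₂ Y ≤ φ₂ X) ∧
        (∀ X Y : Finset V, φ₂ (X ∩ Y) + φ₂ (X ∪ Y) ≤ φ₂ X + φ₂ Y) ∧
        (∀ X : Finset V, cutW G w X = φ₁ X + φ₂ X) ∧ r = φ₁ Finset.univ}
      (∑ e ∈ G.edgeFinset, w e) := by
  constructor
  · -- membership: φ₁ = edges meeting X, φ₂ = -(edges inside X)
    refine ⟨(fun X => ∑ e ∈ G.edgeFinset, if (∃ u ∈ e, u ∈ X) then w e else 0),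
            (fun X => - ∑ e ∈ G.edgeFinset, if (∀ u ∈ e, u ∈ X) then w e else 0),
            ?_, ?_, ?_, ?_, ?_, ?_, ?_, ?_⟩
    · simp
    · simp only [neg_eq_zero]
      refine Finset.sum_eq_zero fun e _ => ?_
      induction e using Sym2.ind with
      | _ a b =>
        exact if_neg fun h => Finset.notMem_empty a (h a (by simp))
    · intro X Y hXY
      refine Finset.sum_le_sum fun e _ => ?_
      by_cases h : (∃ u ∈ e, u ∈ X)
      · rw [if_pos h, if_pos]
        obtain ⟨u, hu, hux⟩ := h
        exact ⟨u, hu, hXY hux⟩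
      · rw [if_neg h]
        split_ifs with h2
        · exact hw e
        · exact le_rfl
    · intro X Y
      rw [← Finset.sum_add_distrib, ← Finset.sum_add_distrib]
      refine Finset.sum_le_sum fun e he => ?_
      induction e using Sym2.ind with
      | _ a b =>
        by_cases hax : a ∈ X <;> by_cases hbx : b ∈ X <;> by_cases hay : a ∈ Y <;>
          by_cases hby : b ∈ Y <;>
          simp [Sym2.mem_iff, Finset.mem_inter, Finset.mem_union,
            hax, hbx, hay, hby] <;>
          linarith [hw (s(a, b))]
    · intro X Y hXY
      refine neg_le_neg (Finset.sum_le_sum fun e _ => ?_)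
      by_cases h : (∀ u ∈ e, u ∈ X)
      · rw [if_pos h, if_pos fun u hu => hXY (h u hu)]
      · rw [if_neg h]
        split_ifs with h2
        · exact hw e
        · exact le_rfl
    · intro X Y
      have : ∀ A B : Finset V,
          (- ∑ e ∈ G.edgeFinset, if (∀ u ∈ e, u ∈ A) then w e else 0) +
          (- ∑ e ∈ G.edgeFinset, if (∀ u ∈ e, u ∈ B) then w e else 0) =
          - ((∑ e ∈ G.edgeFinset, if (∀ u ∈ e, u ∈ A) then w e else 0) +
             (∑ e ∈ G.edgeFinset, if (∀ u ∈ e, u ∈ B) then w e else 0)) := by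
        intro A B; ring
      rw [this, this, neg_le_neg_iff, ← Finset.sum_add_distrib, ← Finset.sum_add_distrib]
      refine Finset.sum_le_sum fun e he => ?_
      induction e using Sym2.ind with
      | _ a b =>
        by_cases hax : a ∈ X <;> by_cases hbx : b ∈ X <;> by_cases hay : a ∈ Y <;>
          by_cases hby : b ∈ Y <;>
          simp [Sym2.mem_iff, Finset.mem_inter, Finset.mem_union,
            hax, hbx, hay, hby] <;>
          linarith [hw (s(a, b))]
    · intro X
      show cutW G w X = (∑ e ∈ G.edgeFinset, if (∃ u ∈ e, u ∈ X) then w e else 0) +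
        -(∑ e ∈ G.edgeFinset, if (∀ u ∈ e, u ∈ X) then w e else 0)
      rw [← sub_eq_add_neg]
      unfold cutW
      rw [← Finset.sum_sub_distrib]
      refine Finset.sum_congr rfl fun e _ => ?_
      induction e using Sym2.ind with
      | _ a b =>
        by_cases hax : a ∈ X <;> by_cases hbx : b ∈ X <;>
          simp [Sym2.mem_iff, hax, hbx]
    · symm
      refine Finset.sum_congr rfl fun e _ => ?_
      induction e using Sym2.ind with
      | _ a b =>
        exact if_pos ⟨a, by simp, Finset.mem_univ a⟩
  · -- lower bound
    rintro r ⟨φ₁, φ₂, h01, h02, mono₁, sub₁, mono₂, sub₂, hsum, rfl⟩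
    set g : Finset V → ℝ := fun X => -φ₂ X with hg
    have hmono : ∀ X Y : Finset V, X ⊆ Y → g X ≤ g Y := fun X Y h =>
      neg_le_neg (mono₂ X Y h)
    have hsuper : ∀ X Y : Finset V, g X + g Y ≤ g (X ∩ Y) + g (X ∪ Y) := by
      intro X Y
      have := sub₂ X Y
      simp only [hg]
      linarith
    have hφ₁g : ∀ X : Finset V, φ₁ X = cutW G w X + g X := by
      intro X
      have := hsum X
      simp only [hg]
      linarith
    have htri : ∀ a b c : V, G.Adj a b → G.Adj a c → b ≠ c → ¬ G.Adj b c := by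
      intro a b c hab hac hbc habc
      have h1 : a ∉ ({b, c} : Finset V) := by simp [hab.ne, hac.ne]
      have h2 : b ∉ ({c} : Finset V) := by simp [hbc]
      refine hG {a, b, c} ⟨?_, ?_⟩
      · intro x hx y hy hxy
        simp only [Finset.coe_insert, Set.mem_insert_iff, Finset.coe_singleton,
          Set.mem_singleton_iff] at hx hy
        rcases hx with rfl | rfl | rfl <;> rcases hy with rfl | rfl | rfl <;>
          first
            | exact absurd rfl hxy
            | assumption
            | exact hab.symm
            | exact hac.symm
            | exact habc.symm
      · rw [Finset.card_insert_of_notMem h1, Finset.card_insert_of_notMem h2,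
          Finset.card_singleton]
    have hcross : ∀ (B : Finset V) (u v : V), u ≠ v → ¬ G.Adj u v → u ∉ B → v ∉ B →
        g (insert u (insert v B)) + g B ≤ g (insert u B) + g (insert v B) := by
      intro B u v huv hadj hu hv
      have h := sub₁ (insert u B) (insert v B)
      have h1 : insert u B ∩ insert v B = B := by
        ext x
        simp only [Finset.mem_inter, Finset.mem_insert]
        constructor
        · rintro ⟨h1 | h1, h2 | h2⟩ <;> first | assumption | (subst h1; tauto)
        · tauto
      have h2 : insert u B ∪ insert v B = insert u (insert v B) := by
        ext x
        simp only [Finset.mem_union, Finset.mem_insert]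
        tauto
      rw [h1, h2] at h
      have hcut := Stmt18Aux.cut_modular G w huv hadj B hu hv
      simp only [hφ₁g] at h
      linarith
    have hphi : ∀ (A : Finset V) (z : V), z ∉ A → (∀ x, G.Adj z x → x ∈ A) →
        Stmt18Aux.degW G w z ≤ g (insert z A) - g A := by
      intro A z hz hN
      have hc := Stmt18Aux.cut_insert_full G w A hz hN
      have hm := mono₁ A (insert z A) (Finset.subset_insert z A)
      simp only [hφ₁g] at hm
      linarith
    have hg0 : g ∅ = 0 := by simp [hg, h02]
    have hnd : (Finset.univ : Finset V).toList.Nodup := Finset.nodup_toList _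
    have hLf : (Finset.univ : Finset V).toList.toFinset = Finset.univ :=
      Finset.toList_toFinset _
    have h1 := Stmt18Aux.lower_ineq G w hphi (Finset.univ : Finset V).toList hnd
    have h2 := Stmt18Aux.main_ineq htri hmono hsuper hcross hg0
      (Finset.univ : Finset V).toList hnd
    rw [hLf] at h2
    have h3 : ((Finset.univ : Finset V).toList.map (Stmt18Aux.degW G w)).sum =
        ∑ v : V, Stmt18Aux.degW G w v := Finset.sum_map_toList _ _
    have h4 := Stmt18Aux.sum_degW G w
    have h5 : g Finset.univ = φ₁ Finset.univ := by
      have h6 := hφ₁g Finset.univ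
      rw [Stmt18Aux.cut_univ_eq_zero] at h6
      linarith
    rw [h3, h4] at h1
    linarith
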